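/- Let Δt > 0 and let θ : [0, Δt] → ℝ be a C² function with θ''(t) < 0 for all t, θ(0) = 0, θ(Δt) = θ_q where θ_q ∈ (0, π], and θ(t) ∈ [0, θ_q] for all t ∈ [0, Δt]. Then ∫₀^{Δt} cos θ(t) dt < Δt·(sin θ_q)/θ_q. -/

import Mathlib

open Real Set intervalIntegral

/-- For a C² angle function `θ` on `[0, Δt]` with `θ'' < 0`,
`θ(0) = 0`, `θ(Δt) = θ_q ∈ (0, π]` and `θ` taking values in `[0, θ_q]`,
the total horizontal displacement satisfies
`∫₀^Δt cos θ(t) dt < Δt (sin θ_q)/θ_q`. -/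
theorem displacement_upper_bound
    (Δt θq : ℝ) (hΔt : 0 < Δt) (θ θ' θ'' : ℝ → ℝ)
    (hd1 : ∀ t ∈ Set.Icc 0 Δt, HasDerivWithinAt θ (θ' t) (Set.Icc 0 Δt) t)
    (hd2 : ∀ t ∈ Set.Icc 0 Δt, HasDerivWithinAt θ' (θ'' t) (Set.Icc 0 Δt) t)
    (hcont : ContinuousOn θ'' (Set.Icc 0 Δt))
    (hconc : ∀ t ∈ Set.Icc 0 Δt, θ'' t < 0)
    (h0 : θ 0 = 0) (hq : θ Δt = θq) (hθq : 0 < θq ∧ θq ≤ π)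
    (hrange : ∀ t ∈ Set.Icc 0 Δt, θ t ∈ Set.Icc 0 θq) :
    (∫ t in (0 : ℝ)..Δt, Real.cos (θ t)) < Δt * Real.sin θq / θq := by
  obtain ⟨hθq0, hθqπ⟩ := hθq
  have hθcont : ContinuousOn θ (Set.Icc 0 Δt) := fun t ht =>
    (hd1 t ht).continuousWithinAt
  -- strict concavity
  have hIoo : interior (Set.Icc (0:ℝ) Δt) = Set.Ioo 0 Δt := interior_Icc
  have hderiv1 : ∀ x ∈ Set.Ioo (0:ℝ) Δt, deriv θ x = θ' x := by
    intro x hx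
    exact ((hd1 x (Ioo_subset_Icc_self hx)).hasDerivAt
      (Icc_mem_nhds hx.1 hx.2)).deriv
  have hsc : StrictConcaveOn ℝ (Set.Icc 0 Δt) θ := by
    apply strictConcaveOn_of_deriv2_neg (convex_Icc 0 Δt) hθcont
    intro x hx
    rw [hIoo] at hx
    have hev : deriv θ =ᶠ[nhds x] θ' :=
      Filter.eventually_of_mem (isOpen_Ioo.mem_nhds hx) hderiv1
    have : deriv (deriv θ) x = θ'' x := by
      rw [hev.deriv_eq]
      exact ((hd2 x (Ioo_subset_Icc_self hx)).hasDerivAt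
        (Icc_mem_nhds hx.1 hx.2)).deriv
    show deriv (deriv θ) x < 0
    rw [this]; exact hconc x (Ioo_subset_Icc_self hx)
  -- pointwise: θ t > t * θq / Δt for t ∈ Ioo 0 Δt
  have hline : ∀ t ∈ Set.Ioo (0:ℝ) Δt, θq / Δt * t < θ t := by
    intro t ht
    have ha : 0 < 1 - t / Δt := by
      have : t / Δt < 1 := (div_lt_one hΔt).2 ht.2
      linarith
    have hb : 0 < t / Δt := div_pos ht.1 hΔt
    have key := hsc.2 (Set.left_mem_Icc.2 hΔt.le) (Set.right_mem_Icc.2 hΔt.le)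
      hΔt.ne ha hb (by ring)
    have hcomb : (1 - t / Δt) • (0:ℝ) + (t / Δt) • Δt = t := by
      field_simp
      simp only [smul_eq_mul]
      field_simp
      ring
    rw [hcomb, h0, hq] at key
    have : θq / Δt * t = t / Δt * θq := by ring
    rw [this]
    simpa [smul_eq_mul] using key
  -- cos comparison
  have hcos : ∀ t ∈ Set.Ioc (0:ℝ) Δt, Real.cos (θ t) ≤ Real.cos (θq / Δt * t) := by
    intro t ht
    rcases eq_or_lt_of_le ht.2 with rfl | ht2
    · rw [hq, div_mul_cancel₀ _ hΔt.ne']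
    · have h1 := hline t ⟨ht.1, ht2⟩
      have h2 : 0 ≤ θq / Δt * t := mul_nonneg (by positivity) ht.1.le
      have h3 : θ t ≤ π := le_trans (hrange t ⟨ht.1.le, ht.2⟩).2 hθqπ
      exact (Real.cos_lt_cos_of_nonneg_of_le_pi h2 h3 h1).le
  have hstrict : ∃ c ∈ Set.Icc (0:ℝ) Δt, Real.cos (θ c) < Real.cos (θq / Δt * c) := by
    refine ⟨Δt / 2, ⟨by positivity, by linarith⟩, ?_⟩
    have hmem : Δt / 2 ∈ Set.Ioo (0:ℝ) Δt := ⟨by positivity, by linarith⟩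
    have h1 := hline _ hmem
    have h2 : (0:ℝ) ≤ θq / Δt * (Δt / 2) := mul_nonneg (by positivity) (by linarith)
    have h3 : θ (Δt / 2) ≤ π := le_trans (hrange _ (Ioo_subset_Icc_self hmem)).2 hθqπ
    exact Real.cos_lt_cos_of_nonneg_of_le_pi h2 h3 h1
  have hcontg : ContinuousOn (fun t => Real.cos (θq / Δt * t)) (Set.Icc 0 Δt) :=
    (Real.continuous_cos.comp (continuous_const.mul continuous_id)).continuousOn
  have hmain := intervalIntegral.integral_lt_integral_of_continuousOn_of_le_of_exists_lt
    hΔt (Real.continuous_cos.comp_continuousOn hθcont) hcontg hcos hstrict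
  calc (∫ t in (0:ℝ)..Δt, Real.cos (θ t))
      < ∫ t in (0:ℝ)..Δt, Real.cos (θq / Δt * t) := hmain
    _ = Δt * Real.sin θq / θq := by
        rw [intervalIntegral.integral_comp_mul_left Real.cos (by positivity : θq / Δt ≠ 0)]
        rw [mul_zero, div_mul_cancel₀ _ hΔt.ne', integral_cos]
        field_simp
        simp only [smul_eq_mul, Real.sin_zero]
        field_simp
        ring
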